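/- arXiv:1606.08073 — 4 statements merged into one kernel-verified Lean document; each statement's English description precedes it below -/
import Mathlib

section
/- Let G be a simple graph on a vertex set V in which every vertex has degree at most D, and let v ∈ V. Then the collection of maximal cliques of G that contain v is finite and has cardinality at most the binomial coefficient C(D+1, ⌊(D+1)/2⌋). -/
/-- In a simple graph all of whose vertex degrees are bounded by `D`, the family of
maximal cliques containing a fixed vertex `v` is finite, of cardinality at most the
binomial coefficient `C(D+1, ⌊(D+1)/2⌋)` (Sperner bound). -/
theorem maxCliques_through_vertex_finite_card_le
    {V : Type*} (G : SimpleGraph V) [G.LocallyFinite] (D : ℕ)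
    (hdeg : ∀ v : V, G.degree v ≤ D) (v : V) :
    {s : Set V | Maximal G.IsClique s ∧ v ∈ s}.Finite ∧
    {s : Set V | Maximal G.IsClique s ∧ v ∈ s}.ncard ≤ (D + 1).choose ((D + 1) / 2) := by
  classical
  set S := {s : Set V | Maximal G.IsClique s ∧ v ∈ s} with hS
  set N : Finset V := insert v (G.neighborFinset v) with hN
  have hsub : ∀ s ∈ S, s ⊆ (N : Set V) := by
    intro s hs u hu
    rcases eq_or_ne u v with rfl | hne
    · simp [hN]
    · have hadj : G.Adj u v := hs.1.1 hu hs.2 hne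
      simp [hN, SimpleGraph.mem_neighborFinset, hadj.symm]
  have hfin : S.Finite := by
    have := N.finite_toSet.finite_subsets
    exact this.subset (fun s hs => hsub s hs)
  refine ⟨hfin, ?_⟩
  -- map each maximal clique to a finset of the subtype ↥N
  set φ : Set V → Finset ↥N := fun s => Finset.univ.filter (fun u : ↥N => (u : V) ∈ s) with hφ
  have hφsub : ∀ s ∈ S, ∀ t ∈ S, φ s ⊆ φ t → s ⊆ t := by
    intro s hs t ht hst x hx
    have hxN : x ∈ N := hsub s hs hx
    have : (⟨x, hxN⟩ : ↥N) ∈ φ s := by simp [hφ, hx]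
    have := hst this
    simpa [hφ] using this
  have hφinj : Set.InjOn φ S := by
    intro s hs t ht h
    exact le_antisymm (hφsub s hs t ht h.le) (hφsub t ht s hs h.ge)
  -- the image is an antichain
  set 𝒜 : Finset (Finset ↥N) := hfin.toFinset.image φ with h𝒜
  have hanti : IsAntichain (· ⊆ ·) (𝒜 : Set (Finset ↥N)) := by
    intro a ha b hb hab hsubab
    simp only [h𝒜, Finset.coe_image, Set.mem_image, Set.Finite.coe_toFinset] at ha hb
    obtain ⟨s, hs, rfl⟩ := ha
    obtain ⟨t, ht, rfl⟩ := hb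
    have hst : s ⊆ t := hφsub s hs t ht hsubab
    have : t ⊆ s := hs.1.2 ht.1.1 hst
    exact hab (congrArg φ (le_antisymm hst this))
  have hcard : S.ncard = 𝒜.card := by
    rw [h𝒜, Finset.card_image_of_injOn (by simpa using hφinj),
      Set.ncard_eq_toFinset_card _ hfin]
  have hNcard : Fintype.card ↥N ≤ D + 1 := by
    rw [Fintype.card_coe, hN]
    calc (insert v (G.neighborFinset v)).card ≤ (G.neighborFinset v).card + 1 :=
          Finset.card_insert_le _ _
      _ = G.degree v + 1 := by rw [SimpleGraph.card_neighborFinset_eq_degree]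
      _ ≤ D + 1 := Nat.add_le_add_right (hdeg v) 1
  calc S.ncard = 𝒜.card := hcard
    _ ≤ (Fintype.card ↥N).choose (Fintype.card ↥N / 2) := IsAntichain.sperner hanti
    _ ≤ (D + 1).choose (Fintype.card ↥N / 2) := Nat.choose_le_choose _ hNcard
    _ ≤ (D + 1).choose ((D + 1) / 2) := Nat.choose_le_middle _ _
end

section
/- Let G be a simple graph in which every vertex has degree at most D, and let C(G) be its clique graph, whose vertices are the maximal cliques of G, two distinct maximal cliques being adjacent iff their intersection is nonempty. Then every vertex of C(G) has degree at most (D+1)·(Sper − 1), where Sper = C(D+1, ⌊(D+1)/2⌋) is the binomial coefficient bounding the number of maximal cliques through a single vertex. -/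
/-- The clique graph of a simple graph `G`: its vertices are the maximal cliques of
`G`, two distinct maximal cliques being adjacent iff they intersect. -/
def cliqueGraph {V : Type*} (G : SimpleGraph V) :
    SimpleGraph {s : Set V // Maximal G.IsClique s} where
  Adj A B := A ≠ B ∧ (A.1 ∩ B.1).Nonempty
  symm := by
    constructor
    rintro A B ⟨hne, hint⟩
    exact ⟨hne.symm, by rwa [Set.inter_comm]⟩
  loopless := by
    constructor
    rintro A ⟨hne, -⟩
    exact hne rfl

/-- A clique containing `v` is contained in the closed neighborhood of `v`. -/
lemma clique_subset_closedNbhd {V : Type*} {G : SimpleGraph V} {s : Set V}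
    (hs : G.IsClique s) {v : V} (hv : v ∈ s) :
    s ⊆ insert v (G.neighborSet v) := by
  intro w hw
  rcases eq_or_ne v w with rfl | hne
  · exact Set.mem_insert _ _
  · exact Set.mem_insert_of_mem _ (hs hv hw hne)

/-- Sperner bound: the set of maximal cliques through a vertex is finite,
of cardinality at most `C(D+1, (D+1)/2)`. -/
lemma maximalCliques_through_vertex {V : Type*} (G : SimpleGraph V) [G.LocallyFinite]
    (D : ℕ) (hdeg : ∀ v : V, G.degree v ≤ D) (v : V) :
    {B : {s : Set V // Maximal G.IsClique s} | v ∈ B.1}.Finite ∧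
    {B : {s : Set V // Maximal G.IsClique s} | v ∈ B.1}.ncard ≤
      (D + 1).choose ((D + 1) / 2) := by
  classical
  set K : Set V := insert v (G.neighborSet v) with hKdef
  have hKfin : K.Finite := (Set.toFinite (G.neighborSet v)).insert v
  haveI : Fintype K := hKfin.fintype
  have hKcard : K.ncard ≤ D + 1 := by
    have h1 : K.ncard ≤ (G.neighborSet v).ncard + 1 := Set.ncard_insert_le _ _
    have h2 : (G.neighborSet v).ncard = G.degree v := by
      rw [← Nat.card_coe_set_eq, Nat.card_eq_fintype_card,
        SimpleGraph.card_neighborSet_eq_degree]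
    have := hdeg v
    omega
  set Mv : Set {s : Set V // Maximal G.IsClique s} := {B | v ∈ B.1} with hMv
  have hsubK : ∀ B ∈ Mv, B.1 ⊆ K := fun B hB => clique_subset_closedNbhd B.2.1 hB
  set F : {s : Set V // Maximal G.IsClique s} → Finset K :=
    fun B => Set.toFinset {x : K | (x : V) ∈ B.1} with hF
  have hFle : ∀ B₁ ∈ Mv, ∀ B₂, F B₁ ⊆ F B₂ → B₁.1 ⊆ B₂.1 := by
    intro B₁ hB₁ B₂ hsub x hx
    have hxK : x ∈ K := hsubK B₁ hB₁ hx
    have : (⟨x, hxK⟩ : K) ∈ F B₁ := by simp [hF, hx]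
    have := hsub this
    simpa [hF] using this
  have hinj : Set.InjOn F Mv := by
    intro B₁ hB₁ B₂ hB₂ heq
    exact Subtype.ext (le_antisymm (hFle B₁ hB₁ B₂ heq.le) (hFle B₂ hB₂ B₁ heq.ge))
  have hfin : Mv.Finite :=
    Set.Finite.of_finite_image (Set.toFinite (F '' Mv)) hinj
  refine ⟨hfin, ?_⟩
  set 𝒜 : Finset (Finset K) := (Set.toFinite (F '' Mv)).toFinset with h𝒜
  have hanti : IsAntichain (· ⊆ ·) ((𝒜 : Set (Finset K))) := by
    rw [h𝒜, Set.Finite.coe_toFinset]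
    rintro _ ⟨B₁, hB₁, rfl⟩ _ ⟨B₂, hB₂, rfl⟩ hne hsub
    exact hne (congrArg F (Subtype.ext
      (B₁.2.eq_of_le B₂.2.1 (hFle B₁ hB₁ B₂ hsub))))
  have hsperner := IsAntichain.sperner hanti
  have hcardK : Fintype.card K = K.ncard := by
    rw [← Nat.card_coe_set_eq, Nat.card_eq_fintype_card]
  have h1 : Mv.ncard = 𝒜.card := by
    rw [h𝒜, ← Set.ncard_eq_toFinset_card _ (Set.toFinite (F '' Mv)),
      Set.ncard_image_of_injOn hinj]
  calc Mv.ncard = 𝒜.card := h1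
    _ ≤ (Fintype.card K).choose (Fintype.card K / 2) := hsperner
    _ ≤ (D + 1).choose (Fintype.card K / 2) :=
        Nat.choose_le_choose _ (hcardK ▸ hKcard)
    _ ≤ (D + 1).choose ((D + 1) / 2) := Nat.choose_le_middle _ _

/-- If every vertex of `G` has degree at most `D`, then every vertex of the clique
graph `C(G)` has degree at most `(D+1) * (Sper - 1)`, where
`Sper = C(D+1, ⌊(D+1)/2⌋)` is the Sperner bound on the number of maximal cliques
through a single vertex. -/
theorem cliqueGraph_degree_le
    {V : Type*} (G : SimpleGraph V) [G.LocallyFinite] (D : ℕ)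
    (hdeg : ∀ v : V, G.degree v ≤ D)
    (A : {s : Set V // Maximal G.IsClique s}) :
    ((cliqueGraph G).neighborSet A).Finite ∧
    ((cliqueGraph G).neighborSet A).ncard ≤ (D + 1) * ((D + 1).choose ((D + 1) / 2) - 1) := by
  classical
  set Sper := (D + 1).choose ((D + 1) / 2) with hSper
  set f : V → Set {s : Set V // Maximal G.IsClique s} :=
    fun v => {B | v ∈ B.1} \ {A} with hf
  have hffin : ∀ v : V, (f v).Finite :=
    fun v => ((maximalCliques_through_vertex G D hdeg v).1).diff
  have hfcard : ∀ v ∈ A.1, (f v).ncard ≤ Sper - 1 := by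
    intro v hv
    have hA : A ∈ {B : {s : Set V // Maximal G.IsClique s} | v ∈ B.1} := hv
    rw [hf, Set.ncard_diff_singleton_of_mem hA]
    exact Nat.sub_le_sub_right (maximalCliques_through_vertex G D hdeg v).2 1
  have hAfin : A.1.Finite := by
    rcases Set.eq_empty_or_nonempty A.1 with he | ⟨v, hv⟩
    · rw [he]; exact Set.finite_empty
    · exact ((Set.toFinite (G.neighborSet v)).insert v).subset
        (clique_subset_closedNbhd A.2.1 hv)
  have hAcard : A.1.ncard ≤ D + 1 := by
    rcases Set.eq_empty_or_nonempty A.1 with he | ⟨v, hv⟩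
    · rw [he]; simp
    · have hKfin : (insert v (G.neighborSet v)).Finite :=
        (Set.toFinite (G.neighborSet v)).insert v
      have h1 : A.1.ncard ≤ (insert v (G.neighborSet v)).ncard :=
        Set.ncard_le_ncard (clique_subset_closedNbhd A.2.1 hv) hKfin
      have h2 : (insert v (G.neighborSet v)).ncard ≤ (G.neighborSet v).ncard + 1 :=
        Set.ncard_insert_le _ _
      have h3 : (G.neighborSet v).ncard = G.degree v := by
        rw [← Nat.card_coe_set_eq, Nat.card_eq_fintype_card,
          SimpleGraph.card_neighborSet_eq_degree]
      have := hdeg v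
      omega
  set U : Set {s : Set V // Maximal G.IsClique s} := ⋃ v ∈ A.1, f v with hU
  have hsub : (cliqueGraph G).neighborSet A ⊆ U := by
    rintro B ⟨hne, v, hvA, hvB⟩
    exact Set.mem_biUnion hvA ⟨hvB, fun h => hne.symm (by simpa using h)⟩
  have hUfin : U.Finite := hAfin.biUnion fun v _ => hffin v
  refine ⟨hUfin.subset hsub, le_trans (Set.ncard_le_ncard hsub hUfin) ?_⟩
  have hUle : hUfin.toFinset ⊆ hAfin.toFinset.biUnion fun v => (hffin v).toFinset := by
    intro B hB
    rw [Set.Finite.mem_toFinset] at hB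
    obtain ⟨v, hv, hBv⟩ := Set.mem_iUnion₂.1 hB
    exact Finset.mem_biUnion.2 ⟨v, hAfin.mem_toFinset.2 hv, (hffin v).mem_toFinset.2 hBv⟩
  calc U.ncard = hUfin.toFinset.card := Set.ncard_eq_toFinset_card _ hUfin
    _ ≤ (hAfin.toFinset.biUnion fun v => (hffin v).toFinset).card :=
        Finset.card_le_card hUle
    _ ≤ hAfin.toFinset.card * (Sper - 1) := by
        apply Finset.card_biUnion_le_card_mul
        intro v hv
        rw [← Set.ncard_eq_toFinset_card _ (hffin v)]
        exact hfcard v (hAfin.mem_toFinset.1 hv)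
    _ ≤ (D + 1) * (Sper - 1) := by
        apply Nat.mul_le_mul_right
        rw [← Set.ncard_eq_toFinset_card _ hAfin]
        exact hAcard
end

section
/- Let G be a connected simple graph in which every vertex has degree at most D, and let C(G) be its clique graph (vertices: the maximal cliques of G; adjacency: distinct maximal cliques with nonempty intersection). Let f assign to every vertex v of G some maximal clique f(v) containing v. Then C(G) is connected, every maximal clique of G is at clique-graph distance at most 1 from the image of f, and for all vertices v, v' of G one has d_G(v, v') − 1 ≤ d_{C(G)}(f(v), f(v')) ≤ d_G(v, v') + 1. In particular G and C(G) are 1-roughly isometric. -/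
section Aux

variable {V : Type*} {G : SimpleGraph V}

/-- Every clique extends to a maximal clique. -/
lemma exists_maximal_clique (s : Set V) (hs : G.IsClique s) :
    ∃ t : Set V, s ⊆ t ∧ Maximal G.IsClique t := by
  obtain ⟨m, hsm, hm⟩ := zorn_subset_nonempty {t : Set V | G.IsClique t}
    (fun c hc hchain _ => by
      refine ⟨⋃₀ c, ?_, fun t ht => Set.subset_sUnion_of_mem ht⟩
      intro x hx y hy hxy
      obtain ⟨tx, htx, hxtx⟩ := hx
      obtain ⟨ty, hty, hyty⟩ := hy
      rcases hchain.total htx hty with h | h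
      · exact (hc hty) (h hxtx) hyty hxy
      · exact (hc htx) hxtx (h hyty) hxy) s hs
  exact ⟨m, hsm, hm⟩

/-- If two maximal cliques intersect, they are equal or adjacent in the clique graph. -/
lemma cliqueGraph_step {A B : {s : Set V // Maximal G.IsClique s}}
    (h : (A.1 ∩ B.1).Nonempty) :
    ∃ q : (cliqueGraph G).Walk A B, q.length ≤ 1 := by
  by_cases hAB : A = B
  · subst hAB; exact ⟨SimpleGraph.Walk.nil, by simp⟩
  · have hadj : (cliqueGraph G).Adj A B := ⟨hAB, h⟩
    exact ⟨SimpleGraph.Walk.cons hadj SimpleGraph.Walk.nil, by simp⟩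

/-- Two vertices in a common clique: short walk in `G`. -/
lemma clique_step {A : Set V} (hA : G.IsClique A) {v w : V} (hv : v ∈ A) (hw : w ∈ A) :
    ∃ p : G.Walk v w, p.length ≤ 1 := by
  by_cases hvw : v = w
  · subst hvw; exact ⟨SimpleGraph.Walk.nil, by simp⟩
  · exact ⟨SimpleGraph.Walk.cons (hA hv hw hvw) SimpleGraph.Walk.nil, by simp⟩

/-- Upper bound: a walk in `G` yields a walk in the clique graph one step longer. -/
lemma walk_to_cliqueWalk {v v' : V} (p : G.Walk v v') :
    ∀ (A B : {s : Set V // Maximal G.IsClique s}), v ∈ A.1 → v' ∈ B.1 →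
    ∃ q : (cliqueGraph G).Walk A B, q.length ≤ p.length + 1 := by
  induction p with
  | nil => exact fun A B hvA hv'B => cliqueGraph_step ⟨_, hvA, hv'B⟩
  | @cons u w _ huw p ih =>
    intro A B hvA hv'B
    obtain ⟨C, hsub, hC⟩ := exists_maximal_clique {u, w}
      (by
        intro x hx y hy hxy
        rcases hx with rfl | rfl <;> rcases hy with rfl | rfl <;>
          first | exact absurd rfl hxy | exact huw | exact huw.symm)
    obtain ⟨q₁, hq₁⟩ := cliqueGraph_step (A := A) (B := ⟨C, hC⟩)
      ⟨u, hvA, hsub (by simp)⟩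
    obtain ⟨q₂, hq₂⟩ := ih ⟨C, hC⟩ B (hsub (by simp)) hv'B
    exact ⟨q₁.append q₂, by simp only [SimpleGraph.Walk.length_append,
      SimpleGraph.Walk.length_cons]; omega⟩

/-- Lower bound: a walk in the clique graph yields a walk in `G` one step longer. -/
lemma cliqueWalk_to_walk {A B : {s : Set V // Maximal G.IsClique s}}
    (q : (cliqueGraph G).Walk A B) : ∀ {v v' : V}, v ∈ A.1 → v' ∈ B.1 →
    ∃ p : G.Walk v v', p.length ≤ q.length + 1 := by
  induction q with
  | @nil A => exact fun hvA hv'B => clique_step A.2.1 hvA hv'B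
  | @cons A C _ hAC q ih =>
    intro v v' hvA hv'B
    obtain ⟨w, hwA, hwC⟩ := hAC.2
    obtain ⟨p₁, hp₁⟩ := clique_step A.2.1 hvA hwA
    obtain ⟨p₂, hp₂⟩ := ih hwC hv'B
    exact ⟨p₁.append p₂, by simp only [SimpleGraph.Walk.length_append,
      SimpleGraph.Walk.length_cons]; omega⟩

end Aux

/-- For a connected simple graph `G` of degree bounded by `D`, choosing for every
vertex `v` a maximal clique `f v` containing `v` yields a `1`-rough isometry between
`G` and its clique graph: `C(G)` is connected, every maximal clique is at
clique-graph distance at most `1` from the image of `f`, and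
`d_G(v,v') - 1 ≤ d_{C(G)}(f v, f v') ≤ d_G(v,v') + 1` for all vertices `v, v'`. -/
theorem cliqueGraph_roughIsometry
    {V : Type*} (G : SimpleGraph V) [G.LocallyFinite] (D : ℕ)
    (hdeg : ∀ v : V, G.degree v ≤ D) (hconn : G.Connected)
    (f : V → {s : Set V // Maximal G.IsClique s}) (hf : ∀ v : V, v ∈ (f v).1) :
    (cliqueGraph G).Connected ∧
    (∀ A : {s : Set V // Maximal G.IsClique s}, ∃ v : V, (cliqueGraph G).dist A (f v) ≤ 1) ∧
    (∀ v v' : V,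
      (G.dist v v' : ℤ) - 1 ≤ ((cliqueGraph G).dist (f v) (f v') : ℤ) ∧
      ((cliqueGraph G).dist (f v) (f v') : ℤ) ≤ (G.dist v v' : ℤ) + 1) := by
  have hV : Nonempty V := hconn.nonempty
  -- every maximal clique is nonempty
  have hne : ∀ A : {s : Set V // Maximal G.IsClique s}, A.1.Nonempty := by
    intro A
    by_contra h
    rw [Set.not_nonempty_iff_eq_empty] at h
    obtain ⟨v⟩ := hV
    have : ({v} : Set V) ⊆ A.1 :=
      A.2.2 (G.isClique_singleton v) (by rw [h]; exact Set.empty_subset _)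
    have := this (Set.mem_singleton v)
    simp [h] at this
  -- connectivity
  have hreach : ∀ A B : {s : Set V // Maximal G.IsClique s}, (cliqueGraph G).Reachable A B := by
    intro A B
    obtain ⟨v, hv⟩ := hne A
    obtain ⟨v', hv'⟩ := hne B
    obtain ⟨p⟩ := hconn v v'
    obtain ⟨q, _⟩ := walk_to_cliqueWalk p A B hv hv'
    exact ⟨q⟩
  haveI : Nonempty {s : Set V // Maximal G.IsClique s} :=
    ⟨⟨_, (exists_maximal_clique ∅ (by simp)).choose_spec.2⟩⟩
  have hCconn : (cliqueGraph G).Connected := ⟨hreach⟩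
  refine ⟨hCconn, ?_, ?_⟩
  · intro A
    obtain ⟨v, hv⟩ := hne A
    obtain ⟨q, hq⟩ := cliqueGraph_step (A := A) (B := f v) ⟨v, hv, hf v⟩
    exact ⟨v, le_trans (SimpleGraph.dist_le q) hq⟩
  · intro v v'
    constructor
    · obtain ⟨q, hq⟩ := (hreach (f v) (f v')).exists_walk_length_eq_dist
      obtain ⟨p, hp⟩ := cliqueWalk_to_walk q (hf v) (hf v')
      have := SimpleGraph.dist_le p
      omega
    · obtain ⟨p, hp⟩ := (hconn v v').exists_walk_length_eq_dist
      obtain ⟨q, hq⟩ := walk_to_cliqueWalk p (f v) (f v') (hf v) (hf v')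
      have := SimpleGraph.dist_le q
      omega
end

section
/- Let G₁ and G₂ be connected simple graphs with globally bounded vertex degree, and suppose G₁ has uniform polynomial growth of exponent α: there exist constants A, B > 0 and r₀ such that A·r^α ≤ β(G₁, v, r) ≤ B·r^α for all vertices v and all r ≥ r₀. If there is a (λ, ε)-quasi-isometry f : V(G₁) → V(G₂) (with image C-dense in G₂), then G₂ also has uniform polynomial growth of the same exponent α: there exist A', B' > 0 and r₀' with A'·r^α ≤ β(G₂, w, r) ≤ B'·r^α for all vertices w of G₂ and all r ≥ r₀'. -/
open Set Filter

private lemma exists_adj_dist_succ_le {V : Type*} {G : SimpleGraph V} {v w : V}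
    (h : G.dist v w ≠ 0) : ∃ u, G.Adj u w ∧ G.dist v u + 1 ≤ G.dist v w := by
  have h' : G.dist w v ≠ 0 := by rwa [SimpleGraph.dist_comm]
  obtain ⟨p, hp⟩ := SimpleGraph.exists_walk_of_dist_ne_zero h'
  cases p with
  | nil => simp at hp h'
  | @cons _ u _ hadj q =>
    refine ⟨u, hadj.symm, ?_⟩
    have h1 : G.dist v u ≤ q.length := by
      rw [SimpleGraph.dist_comm]; exact SimpleGraph.dist_le q
    simp only [SimpleGraph.Walk.length_cons] at hp
    rw [show G.dist v w = G.dist w v from SimpleGraph.dist_comm, ← hp]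
    omega

private lemma ncard_le_of_cover {X Y : Type*} {S : Set X} {T : Set Y} (hT : T.Finite)
    (F : Y → Set X) (K : ℕ)
    (hF : ∀ t ∈ T, (F t).Finite ∧ (F t).ncard ≤ K)
    (hS : ∀ s ∈ S, ∃ t ∈ T, s ∈ F t) :
    S.Finite ∧ S.ncard ≤ K * T.ncard := by
  classical
  set T' := hT.toFinset with hT'
  let F' : Y → Finset X := fun t => if h : t ∈ T then ((hF t h).1).toFinset else ∅
  have hsub : S ⊆ ↑(T'.biUnion F') := by
    intro s hs
    obtain ⟨t, ht, hst⟩ := hS s hs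
    simp only [Finset.coe_biUnion, Set.mem_iUnion]
    exact ⟨t, by simpa [hT'] using ht, by simp [F', dif_pos ht, ((hF t ht).1).mem_toFinset, hst]⟩
  refine ⟨Set.Finite.subset (T'.biUnion F').finite_toSet hsub, ?_⟩
  have h1 : S.ncard ≤ (T'.biUnion F').card := by
    rw [← Set.ncard_coe_finset]
    exact Set.ncard_le_ncard hsub (T'.biUnion F').finite_toSet
  have h2 : (T'.biUnion F').card ≤ T'.card * K := by
    refine Finset.card_biUnion_le_card_mul _ _ _ (fun t ht => ?_)
    have htT : t ∈ T := by simpa [hT'] using ht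
    simp only [F', dif_pos htT]
    rw [← Set.ncard_eq_toFinset_card (F t) (hF t htT).1]
    exact (hF t htT).2
  have h3 : T'.card = T.ncard := (Set.ncard_eq_toFinset_card T hT).symm
  rw [h3, Nat.mul_comm] at h2
  omega

private lemma ball_finite_card {V : Type*} (G : SimpleGraph V) [G.LocallyFinite]
    (hconn : G.Connected) (D : ℕ) (hdeg : ∀ x, G.degree x ≤ D) :
    ∀ (r : ℕ) (v : V), {w | G.dist v w ≤ r}.Finite ∧
      {w | G.dist v w ≤ r}.ncard ≤ (D + 1) ^ r := by
  intro r
  induction r with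
  | zero =>
    intro v
    have hset : {w | G.dist v w ≤ 0} = {v} := by
      ext w
      simp only [Set.mem_setOf_eq, Nat.le_zero, hconn.dist_eq_zero_iff, Set.mem_singleton_iff]
      exact eq_comm
    rw [hset]
    simp
  | succ r ih =>
    intro v
    have hsub : {w | G.dist v w ≤ r + 1} ⊆
        {w | G.dist v w ≤ r} ∪ ⋃ u ∈ {w | G.dist v w ≤ r}, G.neighborSet u := by
      intro w hw
      by_cases hwv : G.dist v w = 0
      · left; simp only [Set.mem_setOf_eq]; omega
      · obtain ⟨u, hadj, hdu⟩ := exists_adj_dist_succ_le hwv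
        right
        refine Set.mem_biUnion (show u ∈ {w | G.dist v w ≤ r} from ?_) hadj
        simp only [Set.mem_setOf_eq] at hw ⊢
        omega
    obtain ⟨hfin, hcard⟩ := ih v
    have hun := ncard_le_of_cover (S := ⋃ u ∈ {w | G.dist v w ≤ r}, G.neighborSet u)
      hfin (fun u => G.neighborSet u) D
      (fun t ht => ⟨(G.neighborSet t).toFinite, by
        rw [Set.ncard_eq_toFinset_card']
        exact hdeg t⟩)
      (fun s hs => by simpa using hs)
    have hfin2 : ({w | G.dist v w ≤ r + 1}).Finite :=
      Set.Finite.subset (hfin.union hun.1) hsub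
    refine ⟨hfin2, ?_⟩
    calc {w | G.dist v w ≤ r + 1}.ncard
        ≤ ({w | G.dist v w ≤ r} ∪ ⋃ u ∈ {w | G.dist v w ≤ r}, G.neighborSet u).ncard :=
          Set.ncard_le_ncard hsub (hfin.union hun.1)
      _ ≤ {w | G.dist v w ≤ r}.ncard +
          (⋃ u ∈ {w | G.dist v w ≤ r}, G.neighborSet u).ncard := Set.ncard_union_le _ _
      _ ≤ (D + 1) ^ r + D * {w | G.dist v w ≤ r}.ncard := by
          have := hun.2; omega
      _ ≤ (D + 1) ^ r + D * (D + 1) ^ r := by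
          have : D * {w | G.dist v w ≤ r}.ncard ≤ D * (D + 1) ^ r :=
            Nat.mul_le_mul_left D hcard
          omega
      _ = (D + 1) ^ (r + 1) := by ring

/-- The growth function of a graph: the number of vertices within graph distance `r`
of the vertex `v`. -/
noncomputable def graphGrowth {V : Type*} (G : SimpleGraph V) (v : V) (r : ℕ) : ℕ :=
  {w : V | G.dist v w ≤ r}.ncard

set_option maxHeartbeats 2000000

/-- If `G₁` has uniform polynomial growth of exponent `α` and `G₂` is
quasi-isometric to `G₁` (both connected of globally bounded vertex degree), then
`G₂` also has uniform polynomial growth of the same exponent `α`. -/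
theorem uniform_polynomial_growth_of_quasiIsometry
    {V₁ V₂ : Type*} (G₁ : SimpleGraph V₁) (G₂ : SimpleGraph V₂)
    [G₁.LocallyFinite] [G₂.LocallyFinite]
    (D₁ D₂ : ℕ) (hdeg₁ : ∀ x : V₁, G₁.degree x ≤ D₁) (hdeg₂ : ∀ y : V₂, G₂.degree y ≤ D₂)
    (hconn₁ : G₁.Connected) (hconn₂ : G₂.Connected)
    (α : ℝ) (A B : ℝ) (hA : 0 < A) (hB : 0 < B) (r₀ : ℕ)
    (hgrowth : ∀ (v : V₁) (r : ℕ), r₀ ≤ r →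
      A * (r : ℝ) ^ α ≤ (graphGrowth G₁ v r : ℝ) ∧ (graphGrowth G₁ v r : ℝ) ≤ B * (r : ℝ) ^ α)
    (f : V₁ → V₂) (lam ε C : ℝ) (hlam : 1 ≤ lam) (hε : 0 ≤ ε) (hC : 0 ≤ C)
    (hlow : ∀ x x' : V₁, lam⁻¹ * (G₁.dist x x' : ℝ) - ε ≤ (G₂.dist (f x) (f x') : ℝ))
    (hup : ∀ x x' : V₁, (G₂.dist (f x) (f x') : ℝ) ≤ lam * (G₁.dist x x' : ℝ) + ε)
    (hdense : ∀ y : V₂, ∃ x : V₁, (G₂.dist y (f x) : ℝ) ≤ C) :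
    ∃ (A' B' : ℝ) (_ : 0 < A') (_ : 0 < B') (r₀' : ℕ),
      ∀ (w : V₂) (r : ℕ), r₀' ≤ r →
        A' * (r : ℝ) ^ α ≤ (graphGrowth G₂ w r : ℝ) ∧
        (graphGrowth G₂ w r : ℝ) ≤ B' * (r : ℝ) ^ α := by
  classical
  by_cases hV₂ : Nonempty V₂
  case neg =>
    exact ⟨1, 1, one_pos, one_pos, 0, fun w r _ => absurd (Nonempty.intro w) hV₂⟩
  obtain ⟨w₀⟩ := hV₂
  obtain ⟨v₀, -⟩ := hdense w₀
  have hlam0 : (0:ℝ) < lam := lt_of_lt_of_le one_pos hlam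
  have hball₁ := ball_finite_card G₁ hconn₁ D₁ hdeg₁
  have hball₂ := ball_finite_card G₂ hconn₂ D₂ hdeg₂
  have hone₁ : ∀ (v : V₁) (r : ℕ), 1 ≤ graphGrowth G₁ v r := by
    intro v r
    have hv : v ∈ {w | G₁.dist v w ≤ r} := by simp [SimpleGraph.dist_self]
    exact (Set.ncard_pos (hball₁ r v).1).mpr ⟨v, hv⟩
  -- the exponent is nonnegative
  have hα : 0 ≤ α := by
    by_contra hneg
    push_neg at hneg
    have h2 : Filter.Tendsto (fun r : ℕ => B * (r : ℝ) ^ α) Filter.atTop (nhds (B * 0)) := by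
      apply Filter.Tendsto.const_mul
      have h0 : Filter.Tendsto (fun x : ℝ => x ^ (-(-α))) Filter.atTop (nhds 0) :=
        tendsto_rpow_neg_atTop (by linarith)
      have h0' := h0.comp tendsto_natCast_atTop_atTop
      simp only [neg_neg] at h0'
      exact h0'
    rw [mul_zero] at h2
    obtain ⟨r, hlt, hger⟩ :=
      ((h2.eventually_lt_const one_pos).and (Filter.eventually_ge_atTop r₀)).exists
    have hg := (hgrowth v₀ r hger).2
    have h1 : (1:ℝ) ≤ (graphGrowth G₁ v₀ r : ℝ) := by exact_mod_cast hone₁ v₀ r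
    linarith
  set K₁ : ℕ := (D₁ + 1) ^ ⌈lam * ε⌉₊ with hK₁def
  set K₂ : ℕ := (D₂ + 1) ^ ⌈C⌉₊ with hK₂def
  have hK₁pos : (0:ℝ) < K₁ := by positivity
  have hK₂pos : (0:ℝ) < K₂ := by positivity
  set c : ℝ := lam * (1 + 2 * C + ε) + 1 with hcdef
  have hc1 : (1:ℝ) ≤ c := by nlinarith
  refine ⟨A * ((2 * lam) ^ α)⁻¹ / K₁, K₂ * B * c ^ α, ?_, ?_,
    max (max (⌈2 * (C + ε + lam)⌉₊ + 1) (⌈2 * lam * ((r₀:ℝ) + 1)⌉₊ + 1)) 1,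
    fun w r hr => ?_⟩
  · have : (0:ℝ) < (2 * lam) ^ α := Real.rpow_pos_of_pos (by linarith) _
    positivity
  · have : (0:ℝ) < c ^ α := Real.rpow_pos_of_pos (by linarith) _
    positivity
  -- extract size conditions on r
  have hr1 : 1 ≤ r := le_trans (le_max_right _ _) hr
  have hr1' : (1:ℝ) ≤ (r:ℝ) := by exact_mod_cast hr1
  have hrc : 2 * (C + ε + lam) ≤ (r:ℝ) := by
    have h1 : ⌈2 * (C + ε + lam)⌉₊ + 1 ≤ r :=
      le_trans (le_trans (le_max_left _ _) (le_max_left _ _)) hr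
    have h2 : (⌈2 * (C + ε + lam)⌉₊ : ℝ) ≤ (r:ℝ) := by exact_mod_cast Nat.le_of_succ_le h1
    exact le_trans (Nat.le_ceil _) h2
  have hrl : 2 * lam * ((r₀:ℝ) + 1) ≤ (r:ℝ) := by
    have h1 : ⌈2 * lam * ((r₀:ℝ) + 1)⌉₊ + 1 ≤ r :=
      le_trans (le_trans (le_max_right _ _) (le_max_left _ _)) hr
    have h2 : (⌈2 * lam * ((r₀:ℝ) + 1)⌉₊ : ℝ) ≤ (r:ℝ) := by exact_mod_cast Nat.le_of_succ_le h1
    exact le_trans (Nat.le_ceil _) h2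
  have hr₀r : r₀ ≤ r := by
    have : (r₀:ℝ) ≤ (r:ℝ) := by nlinarith
    exact_mod_cast this
  obtain ⟨x_w, hx_w⟩ := hdense w
  constructor
  -- LOWER BOUND
  · set s : ℕ := ⌊((r:ℝ) - C - ε) / lam⌋₊ with hsdef
    have hargpos : 0 ≤ ((r:ℝ) - C - ε) / lam := by
      apply div_nonneg _ (le_of_lt hlam0); nlinarith
    have hfl := Nat.floor_le hargpos
    have hs_up : lam * (s:ℝ) + ε + C ≤ (r:ℝ) := by
      have h3 : lam * (s:ℝ) ≤ (r:ℝ) - C - ε := by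
        rw [mul_comm]; exact (le_div_iff₀ hlam0).mp hfl
      linarith
    have hs_ge : (r:ℝ) / (2 * lam) ≤ (s:ℝ) := by
      have h4 : ((r:ℝ) - C - ε) / lam - 1 < (s:ℝ) := Nat.sub_one_lt_floor _
      have h4' : ((r:ℝ) - C - ε) / lam ≤ (s:ℝ) + 1 := by linarith
      have h5 : (r:ℝ) - C - ε ≤ lam * ((s:ℝ) + 1) := by
        rw [mul_comm]; exact (div_le_iff₀ hlam0).mp h4'
      rw [div_le_iff₀ (by positivity)]
      nlinarith
    have hs_r₀ : r₀ ≤ s := by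
      have h6 : (r₀:ℝ) ≤ (s:ℝ) := by
        have h7 : (r₀:ℝ) + 1 ≤ (r:ℝ) / (2 * lam) := by
          rw [le_div_iff₀ (by positivity)]; nlinarith
        linarith
      exact_mod_cast h6
    -- covering: the ball in G₁ around x_w of radius s is covered by fibers of f over the ball
    have hcov := ncard_le_of_cover (S := {x | G₁.dist x_w x ≤ s}) (T := {y | G₂.dist w y ≤ r})
      (hball₂ r w).1 (fun t => {x | f x = t}) K₁
      (fun t _ => by
        by_cases hne : ({x | f x = t} : Set V₁).Nonempty
        · obtain ⟨x₀, hx₀⟩ := hne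
          have hsub : {x | f x = t} ⊆ {x | G₁.dist x₀ x ≤ ⌈lam * ε⌉₊} := by
            intro x hx
            simp only [Set.mem_setOf_eq] at hx hx₀ ⊢
            have hdd : G₂.dist (f x₀) (f x) = 0 := by rw [hx₀, hx, SimpleGraph.dist_self]
            have h8 := hlow x₀ x
            rw [hdd] at h8
            have h9 : (G₁.dist x₀ x : ℝ) ≤ lam * ε := by
              have h10 : lam⁻¹ * (G₁.dist x₀ x : ℝ) ≤ ε := by simpa using h8
              calc (G₁.dist x₀ x : ℝ) = lam * (lam⁻¹ * (G₁.dist x₀ x : ℝ)) := by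
                    field_simp
                _ ≤ lam * ε := by
                    apply mul_le_mul_of_nonneg_left h10 (le_of_lt hlam0)
            have h11 : (G₁.dist x₀ x : ℝ) ≤ (⌈lam * ε⌉₊ : ℝ) := le_trans h9 (Nat.le_ceil _)
            exact_mod_cast h11
          exact ⟨Set.Finite.subset (hball₁ _ x₀).1 hsub,
            le_trans (Set.ncard_le_ncard hsub (hball₁ _ x₀).1) (hball₁ _ x₀).2⟩
        · rw [Set.not_nonempty_iff_eq_empty] at hne
          simp [hne])
      (fun x hx => by
        refine ⟨f x, ?_, rfl⟩
        simp only [Set.mem_setOf_eq] at hx ⊢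
        have ht : G₂.dist w (f x) ≤ G₂.dist w (f x_w) + G₂.dist (f x_w) (f x) :=
          hconn₂.dist_triangle
        have h12 := hup x_w x
        have h13 : (G₁.dist x_w x : ℝ) ≤ (s:ℝ) := by exact_mod_cast hx
        have h14 : (G₂.dist w (f x) : ℝ) ≤ (r:ℝ) := by
          have ht' : (G₂.dist w (f x) : ℝ) ≤
              (G₂.dist w (f x_w) : ℝ) + (G₂.dist (f x_w) (f x) : ℝ) := by exact_mod_cast ht
          have : (G₂.dist (f x_w) (f x) : ℝ) ≤ lam * (s:ℝ) + ε := by nlinarith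
          linarith
        exact_mod_cast h14)
    have hQ : (graphGrowth G₁ x_w s : ℝ) ≤ (K₁:ℝ) * (graphGrowth G₂ w r : ℝ) := by
      have := hcov.2
      exact_mod_cast this
    have hg := (hgrowth x_w s hs_r₀).1
    have hrs : ((r:ℝ) / (2 * lam)) ^ α ≤ (s:ℝ) ^ α :=
      Real.rpow_le_rpow (by positivity) hs_ge hα
    have hsplit : ((r:ℝ) / (2 * lam)) ^ α = (r:ℝ) ^ α / (2 * lam) ^ α :=
      Real.div_rpow (by positivity) (by positivity) α
    have h2lam : (0:ℝ) < (2 * lam) ^ α := Real.rpow_pos_of_pos (by positivity) _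
    rw [div_mul_eq_mul_div, div_le_iff₀ hK₁pos]
    calc A * ((2 * lam) ^ α)⁻¹ * (r:ℝ) ^ α
        = A * (((r:ℝ) / (2 * lam)) ^ α) := by rw [hsplit]; ring
      _ ≤ A * (s:ℝ) ^ α := by nlinarith
      _ ≤ (graphGrowth G₁ x_w s : ℝ) := hg
      _ ≤ (K₁:ℝ) * (graphGrowth G₂ w r : ℝ) := hQ
      _ = (graphGrowth G₂ w r : ℝ) * (K₁:ℝ) := by ring
  -- UPPER BOUND
  · set R : ℕ := ⌈lam * ((r:ℝ) + 2 * C + ε)⌉₊ with hRdef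
    have hRr : (r:ℝ) ≤ (R:ℝ) := le_trans (by nlinarith) (Nat.le_ceil _)
    have hRr' : r ≤ R := by exact_mod_cast hRr
    have hcov := ncard_le_of_cover (S := {y | G₂.dist w y ≤ r}) (T := {x | G₁.dist x_w x ≤ R})
      (hball₁ R x_w).1 (fun t => {y | G₂.dist (f t) y ≤ ⌈C⌉₊}) K₂
      (fun t _ => ⟨(hball₂ _ (f t)).1, (hball₂ _ (f t)).2⟩)
      (fun y hy => by
        obtain ⟨x, hx⟩ := hdense y
        refine ⟨x, ?_, ?_⟩
        · simp only [Set.mem_setOf_eq] at hy ⊢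
          have ht : G₂.dist (f x_w) (f x) ≤
              G₂.dist (f x_w) w + G₂.dist w y + G₂.dist y (f x) :=
            le_trans hconn₂.dist_triangle
              (Nat.add_le_add_right hconn₂.dist_triangle _)
          have ht' : (G₂.dist (f x_w) (f x) : ℝ) ≤
              (G₂.dist (f x_w) w : ℝ) + (G₂.dist w y : ℝ) + (G₂.dist y (f x) : ℝ) := by
            exact_mod_cast ht
          have hc1' : (G₂.dist (f x_w) w : ℝ) ≤ C := by
            rw [show G₂.dist (f x_w) w = G₂.dist w (f x_w) from SimpleGraph.dist_comm]
            exact hx_w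
          have hy' : (G₂.dist w y : ℝ) ≤ (r:ℝ) := by exact_mod_cast hy
          have h15 := hlow x_w x
          have h16 : (G₁.dist x_w x : ℝ) ≤ lam * ((r:ℝ) + 2 * C + ε) := by
            have h17 : lam⁻¹ * (G₁.dist x_w x : ℝ) ≤ (r:ℝ) + 2 * C + ε := by linarith
            calc (G₁.dist x_w x : ℝ) = lam * (lam⁻¹ * (G₁.dist x_w x : ℝ)) := by field_simp
              _ ≤ lam * ((r:ℝ) + 2 * C + ε) :=
                  mul_le_mul_of_nonneg_left h17 (le_of_lt hlam0)
          have h18 : (G₁.dist x_w x : ℝ) ≤ (R:ℝ) := le_trans h16 (Nat.le_ceil _)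
          exact_mod_cast h18
        · simp only [Set.mem_setOf_eq]
          have h19 : (G₂.dist (f x) y : ℝ) ≤ (⌈C⌉₊ : ℝ) := by
            rw [show G₂.dist (f x) y = G₂.dist y (f x) from SimpleGraph.dist_comm]
            exact le_trans hx (Nat.le_ceil _)
          exact_mod_cast h19)
    have hQ : (graphGrowth G₂ w r : ℝ) ≤ (K₂:ℝ) * (graphGrowth G₁ x_w R : ℝ) := by
      have := hcov.2
      exact_mod_cast this
    have hg := (hgrowth x_w R (le_trans hr₀r hRr')).2
    have hRc : (R:ℝ) ≤ c * (r:ℝ) := by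
      have h20 : (R:ℝ) < lam * ((r:ℝ) + 2 * C + ε) + 1 :=
        Nat.ceil_lt_add_one (by nlinarith)
      have h21 : lam * ((r:ℝ) + 2 * C + ε) + 1 ≤ c * (r:ℝ) := by
        rw [hcdef]
        have hx : (0:ℝ) ≤ lam * (2 * C + ε) := by positivity
        nlinarith [mul_nonneg hx (by linarith : (0:ℝ) ≤ (r:ℝ) - 1)]
      linarith
    have hRα : (R:ℝ) ^ α ≤ (c * (r:ℝ)) ^ α :=
      Real.rpow_le_rpow (by positivity) hRc hα
    have hmul : (c * (r:ℝ)) ^ α = c ^ α * (r:ℝ) ^ α :=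
      Real.mul_rpow (by linarith) (by positivity)
    have hcα : (0:ℝ) < c ^ α := Real.rpow_pos_of_pos (by linarith) _
    calc (graphGrowth G₂ w r : ℝ)
        ≤ (K₂:ℝ) * (graphGrowth G₁ x_w R : ℝ) := hQ
      _ ≤ (K₂:ℝ) * (B * (R:ℝ) ^ α) := by nlinarith
      _ ≤ (K₂:ℝ) * (B * ((c * (r:ℝ)) ^ α)) :=
          mul_le_mul_of_nonneg_left (mul_le_mul_of_nonneg_left hRα hB.le) hK₂pos.le
      _ = (K₂:ℝ) * B * c ^ α * (r:ℝ) ^ α := by rw [hmul]; ring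
end
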